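/- As θ → θπ, the function g admits the quadratic expansion g(θ) − (α/2) · ⟨∇²A(θπ)(θ − θπ), θ − θπ⟩ = o(‖θ − θπ‖²), where ∇²A(θπ) denotes the second derivative (Hessian) of A at θπ regarded as a self-adjoint linear map on H. -/

import Mathlib

set_option maxHeartbeats 1000000


open Real Topology Asymptotics
open scoped RealInnerProductSpace

/-- Quadratic expansion of the Jensen-gap divergence
`g θ = (1/(1-α)) (α A θπ + (1-α) A θ - A (α θπ + (1-α) θ))` around `θπ`:
`g θ - (α/2) ⟪∇²A(θπ)(θ - θπ), θ - θπ⟫ = o(‖θ - θπ‖²)` as `θ → θπ`, where the Hessian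
`∇²A(θπ)` is regarded as a (self-adjoint) continuous linear map on `H` identified with
the second derivative of `A` at `θπ`. -/
theorem statement10
    {H : Type*} [NormedAddCommGroup H] [InnerProductSpace ℝ H] [FiniteDimensional ℝ H]
    (U : Set H) (hUo : IsOpen U)
    (A : H → ℝ) (hA : ContDiffOn ℝ 2 A U)
    (θπ : H) (hθπ : θπ ∈ U)
    (α : ℝ) (hα : 0 < α) (hα1 : α ≠ 1)
    (g : H → ℝ)
    (hg : ∀ θ, g θ = (1/(1-α)) * (α * A θπ + (1-α) * A θ - A (α • θπ + (1-α) • θ)))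
    (Hess : H →L[ℝ] H)
    (hHess : ∀ v w : H, ⟪Hess v, w⟫ = iteratedFDerivWithin ℝ 2 A U θπ ![v, w]) :
    (fun θ => g θ - (α/2) * ⟪Hess (θ - θπ), θ - θπ⟫)
      =o[𝓝 θπ] (fun θ => ‖θ - θπ‖ ^ 2) := by
  have h1α : (1:ℝ) - α ≠ 0 := sub_ne_zero.2 (Ne.symm hα1)
  set f : H → H →L[ℝ] ℝ := fderiv ℝ A with hfdef
  set B : H →L[ℝ] H →L[ℝ] ℝ := fderiv ℝ f θπ with hBdef
  have hAd : ∀ x ∈ U, HasFDerivAt A (f x) x := fun x hx =>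
    (((hA x hx).contDiffAt (hUo.mem_nhds hx)).differentiableAt two_ne_zero).hasFDerivAt
  have hAct : ContDiffAt ℝ 2 A θπ := (hA θπ hθπ).contDiffAt (hUo.mem_nhds hθπ)
  have hfd : HasFDerivAt f B θπ :=
    ((hAct.fderiv_right (m := 1) (by norm_num)).differentiableAt one_ne_zero).hasFDerivAt
  have hBsymm : ∀ v w, B v w = B w v := by
    have hev : ∀ᶠ y in 𝓝 θπ, HasFDerivAt A (f y) y := by
      filter_upwards [hUo.mem_nhds hθπ] with y hy using hAd y hy
    exact fun v w => second_derivative_symmetric_of_eventually hev hfd v w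
  have hQB : ∀ v w : H, ⟪Hess v, w⟫ = B v w := by
    intro v w
    rw [hHess v w, iteratedFDerivWithin_two_apply A hUo.uniqueDiffOn hθπ]
    have h1 : Set.EqOn (fderivWithin ℝ A U) f U := fun x hx => fderivWithin_of_isOpen hUo hx
    rw [fderivWithin_congr h1 (h1 hθπ), fderivWithin_of_isOpen hUo hθπ]
    simp
    rfl
  set F : H → ℝ := fun h => A (θπ + h) - A θπ - f θπ h - (1/2) * B h h with hFdef
  have hFderiv : ∀ v : H, θπ + v ∈ U → HasFDerivAt F (f (θπ + v) - f θπ - B v) v := by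
    intro v hv
    have h1 : HasFDerivAt (fun w : H => A (θπ + w)) (f (θπ + v)) v := by
      have := (hAd _ hv).comp v ((hasFDerivAt_id v).const_add θπ)
      simpa [Function.comp_def] using this
    have h3 : HasFDerivAt (fun w : H => B w w) (B v + B.flip v) v := by
      have hb := (ContinuousLinearMap.isBoundedBilinearMap B).hasFDerivAt (v, v)
      have hd : HasFDerivAt (fun w : H => (w, w))
          ((ContinuousLinearMap.id ℝ H).prod (ContinuousLinearMap.id ℝ H)) v :=
        (hasFDerivAt_id v).prodMk (hasFDerivAt_id v)
      have hcomp := HasFDerivAt.comp (f := fun w : H => (w, w)) v hb hd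
      have heq : (((ContinuousLinearMap.isBoundedBilinearMap B).deriv (v, v)).comp
          ((ContinuousLinearMap.id ℝ H).prod (ContinuousLinearMap.id ℝ H))) = B v + B.flip v := by
        ext k
        simp [IsBoundedBilinearMap.deriv_apply, hBsymm v k]
      rw [heq] at hcomp
      exact hcomp
    have h4 : HasFDerivAt (fun w : H => (1/2 : ℝ) * B w w) ((1/2 : ℝ) • (B v + B.flip v)) v :=
      h3.const_mul (1/2)
    have h5 := ((h1.sub_const (A θπ)).sub (f θπ).hasFDerivAt).sub h4
    have hhalf : ((1/2 : ℝ) • (B v + B.flip v)) = B v := by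
      ext k
      simp only [ContinuousLinearMap.smul_apply, ContinuousLinearMap.add_apply,
        ContinuousLinearMap.flip_apply, smul_eq_mul]
      rw [hBsymm k v]
      ring
    rw [hhalf] at h5
    exact h5
  have hFo : F =o[𝓝 (0:H)] (fun h : H => ‖h‖ ^ 2) := by
    rw [isLittleO_iff]
    intro ε hε
    obtain ⟨r, hr, hrU⟩ := Metric.isOpen_iff.1 hUo θπ hθπ
    have hlo : (fun v : H => f (θπ + v) - f θπ - B v) =o[𝓝 0] (fun v => v) :=
      hasFDerivAt_iff_isLittleO_nhds_zero.1 hfd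
    have hbd := isLittleO_iff.1 hlo hε
    rw [Metric.eventually_nhds_iff] at hbd ⊢
    obtain ⟨δ, hδ, hbd⟩ := hbd
    refine ⟨min δ r, lt_min hδ hr, fun {h} hh => ?_⟩
    rw [dist_zero_right] at hh
    have hhδ : ‖h‖ < δ := hh.trans_le (min_le_left _ _)
    have hhr : ‖h‖ < r := hh.trans_le (min_le_right _ _)
    set s : Set H := Metric.closedBall (0:H) ‖h‖ with hs
    have hmem : ∀ v ∈ s, θπ + v ∈ U := by
      intro v hv
      apply hrU
      rw [Metric.mem_ball, dist_eq_norm, add_sub_cancel_left]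
      have hd2 : dist v 0 ≤ ‖h‖ := hv
      rw [dist_zero_right] at hd2
      exact lt_of_le_of_lt hd2 hhr
    have key : ∀ v ∈ s, HasFDerivWithinAt F (f (θπ + v) - f θπ - B v) s v :=
      fun v hv => (hFderiv v (hmem v hv)).hasFDerivWithinAt
    have bound : ∀ v ∈ s, ‖f (θπ + v) - f θπ - B v‖ ≤ ε * ‖h‖ := by
      intro v hv
      have hvn : ‖v‖ ≤ ‖h‖ := by
        have hd2 : dist v 0 ≤ ‖h‖ := hv
        rwa [dist_zero_right] at hd2
      have := hbd (show dist v 0 < δ by rw [dist_zero_right]; exact lt_of_le_of_lt hvn hhδ)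
      exact this.trans (mul_le_mul_of_nonneg_left hvn hε.le)
    have h0s : (0:H) ∈ s := Metric.mem_closedBall_self (norm_nonneg h)
    have hhs : h ∈ s := by simp [hs]
    have := (convex_closedBall (0:H) ‖h‖).norm_image_sub_le_of_norm_hasFDerivWithin_le key bound h0s hhs
    have hF0 : F 0 = 0 := by simp [hFdef]
    rw [hF0, sub_zero, sub_zero] at this
    calc ‖F h‖ ≤ ε * ‖h‖ * ‖h‖ := this
    _ = ε * ‖‖h‖ ^ 2‖ := by rw [norm_of_nonneg (by positivity)]; ring
  have ht1 : Filter.Tendsto (fun θ : H => θ - θπ) (𝓝 θπ) (𝓝 0) := by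
    have : Filter.Tendsto (fun θ : H => θ - θπ) (𝓝 θπ) (𝓝 (θπ - θπ)) :=
      Filter.tendsto_id.sub tendsto_const_nhds
    simpa using this
  have hE1 : (fun θ => F (θ - θπ)) =o[𝓝 θπ] (fun θ => ‖θ - θπ‖ ^ 2) :=
    hFo.comp_tendsto ht1
  have ht2 : Filter.Tendsto (fun θ : H => (1-α) • (θ - θπ)) (𝓝 θπ) (𝓝 0) := by
    simpa using ht1.const_smul (1-α)
  have hE2' : (fun θ => F ((1-α) • (θ - θπ))) =o[𝓝 θπ] (fun θ => ‖(1-α) • (θ - θπ)‖ ^ 2) :=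
    hFo.comp_tendsto ht2
  have hE2 : (fun θ => F ((1-α) • (θ - θπ))) =o[𝓝 θπ] (fun θ => ‖θ - θπ‖ ^ 2) := by
    refine hE2'.trans_isBigO ?_
    have heq : (fun θ : H => ‖(1-α) • (θ - θπ)‖ ^ 2)
        = fun θ => (1-α) ^ 2 * ‖θ - θπ‖ ^ 2 := by
      funext θ; rw [norm_smul, mul_pow, Real.norm_eq_abs, sq_abs]
    rw [heq]
    exact (isBigO_refl _ _).const_mul_left _
  have key : (fun θ => g θ - (α/2) * ⟪Hess (θ - θπ), θ - θπ⟫)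
      = fun θ => F (θ - θπ) - (1/(1-α)) * F ((1-α) • (θ - θπ)) := by
    funext θ
    have e1 : α • θπ + (1-α) • θ = θπ + (1-α) • (θ - θπ) := by module
    have e2 : θπ + (θ - θπ) = θ := by abel
    rw [hg, hQB, e1, hFdef]
    simp only [e2]
    have lsm : f θπ ((1-α) • (θ - θπ)) = (1-α) * f θπ (θ - θπ) := by simp
    have qsm : B ((1-α) • (θ - θπ)) ((1-α) • (θ - θπ))
        = (1-α) * ((1-α) * B (θ - θπ) (θ - θπ)) := by simp [mul_comm]
    rw [lsm, qsm]
    field_simp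
    ring
  rw [key]
  exact hE1.sub (hE2.const_mul_left _)
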